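/- Let d ≥ 1 and let K be a field whose characteristic is 0 or greater than d. If H ∈ K[x_1,…,x_n]^m is a homogeneous polynomial map of degree d with rk JH ≤ 1, then the components of H are pairwise linearly dependent over K, i.e., for all i, j there exist (λ,μ) ≠ (0,0) in K² with λH_i + μH_j = 0. -/

import Mathlib

set_option maxHeartbeats 1000000

open MvPolynomial

/-- The Jacobian matrix of a polynomial map. -/
noncomputable def jac {K : Type*} [CommRing K] {m n : ℕ}
    (H : Fin m → MvPolynomial (Fin n) K) :
    Matrix (Fin m) (Fin n) (MvPolynomial (Fin n) K) :=
  Matrix.of fun i j => pderiv j (H i)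

/-- The rank of the Jacobian matrix, taken over the rational function field. -/
noncomputable def jacRank {K : Type*} [Field K] {m n : ℕ}
    (H : Fin m → MvPolynomial (Fin n) K) : ℕ :=
  ((jac H).map (algebraMap (MvPolynomial (Fin n) K)
    (FractionRing (MvPolynomial (Fin n) K)))).rank

private lemma castK_ne_zero' {K : Type*} [Field K] {d e : ℕ}
    (hchar : ringChar K = 0 ∨ d < ringChar K) (h1 : 1 ≤ e) (hle : e ≤ d) : (e : K) ≠ 0 := by
  intro h0
  rw [ringChar.spec] at h0
  rcases hchar with h | h
  · rw [h] at h0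
    exact absurd (zero_dvd_iff.mp h0) (by omega)
  · have := Nat.le_of_dvd (by omega) h0
    omega

private lemma coeff_pderiv' {K : Type*} [CommSemiring K] {n : ℕ} (k : Fin n)
    (p : MvPolynomial (Fin n) K) (m : Fin n →₀ ℕ) :
    coeff m (pderiv k p) = ((m k + 1 : ℕ) : K) * coeff (m + Finsupp.single k 1) p := by
  induction p using MvPolynomial.induction_on' with
  | monomial β a =>
    rw [pderiv_monomial, coeff_monomial, coeff_monomial]
    by_cases h : β = m + Finsupp.single k 1
    · subst h
      rw [if_pos (by rw [add_tsub_cancel_right]), if_pos rfl]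
      rw [mul_comm]
      congr 2
      simp [Finsupp.add_apply, Finsupp.single_eq_same]
    · rw [if_neg h, mul_zero]
      by_cases h2 : β - Finsupp.single k 1 = m
      · rw [if_pos h2]
        have hβk : β k = 0 := by
          by_contra hne
          apply h
          rw [← h2, tsub_add_cancel_of_le (Finsupp.single_le_iff.mpr (by omega))]
        rw [hβk, Nat.cast_zero, mul_zero]
      · rw [if_neg h2]
  | add f g ihf ihg => simp [map_add, coeff_add, ihf, ihg, mul_add]

private lemma totalDegree_pderiv_lt' {K : Type*} [CommSemiring K] {n : ℕ} (k : Fin n)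
    {p : MvPolynomial (Fin n) K} (h : pderiv k p ≠ 0) :
    (pderiv k p).totalDegree < p.totalDegree := by
  have key : ∀ m ∈ (pderiv k p).support, (m.sum fun _ e => e) + 1 ≤ p.totalDegree := by
    intro m hm
    have hc : coeff m (pderiv k p) ≠ 0 := mem_support_iff.mp hm
    rw [coeff_pderiv'] at hc
    have h2 : coeff (m + Finsupp.single k 1) p ≠ 0 := fun h0 => hc (by rw [h0, mul_zero])
    have h3 := le_totalDegree (mem_support_iff.mpr h2)
    have h4 : ((m + Finsupp.single k 1).sum fun _ e => e) = (m.sum fun _ e => e) + 1 := by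
      rw [Finsupp.sum_add_index' (fun _ => rfl) (fun _ _ _ => rfl),
        Finsupp.sum_single_index rfl]
    omega
  obtain ⟨m₀, hm₀⟩ := (support_nonempty.mpr h)
  rw [MvPolynomial.totalDegree]
  rw [Finset.sup_lt_iff (by simp only [bot_eq_zero]; have := key m₀ hm₀; omega)]
  intro m hm
  have := key m hm
  omega

private lemma euler' {K : Type*} [CommRing K] {n d : ℕ} {f : MvPolynomial (Fin n) K}
    (hf : f.IsHomogeneous d) :
    ∑ k : Fin n, X k * pderiv k f = C (d : K) * f := by
  have inner : ∀ α ∈ f.support, ∑ k : Fin n, X k * pderiv k (monomial α (coeff α f))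
      = C (d : K) * monomial α (coeff α f) := by
    intro α hα
    have hdeg : ∑ k : Fin n, α k = d := by
      have h1 := hf (mem_support_iff.mp hα)
      have h2 : (Finsupp.weight 1) α = ∑ i ∈ α.support, α i := by
        simp [Finsupp.weight_apply, Finsupp.sum]
      rw [h2] at h1
      rw [← h1]
      exact (Finset.sum_subset (Finset.subset_univ _)
        (fun x _ hx => Finsupp.notMem_support_iff.mp hx)).symm
    have step : ∀ k : Fin n, X k * pderiv k (monomial α (coeff α f))
        = monomial α (coeff α f * (α k : K)) := by
      intro k
      rw [pderiv_monomial]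
      by_cases hk : α k = 0
      · rw [hk]; simp
      · rw [show (X k : MvPolynomial (Fin n) K) = monomial (Finsupp.single k 1) 1 from rfl,
          monomial_mul, one_mul]
        congr 1
        rw [add_comm, tsub_add_cancel_of_le (Finsupp.single_le_iff.mpr (by omega))]
    calc ∑ k : Fin n, X k * pderiv k (monomial α (coeff α f))
        = ∑ k : Fin n, monomial α (coeff α f * (α k : K)) := Finset.sum_congr rfl (fun k _ => step k)
      _ = monomial α (coeff α f * (d : K)) := by
          rw [← map_sum (monomial α), ← Finset.mul_sum]
          congr 1
          rw [← Nat.cast_sum, hdeg]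
      _ = C (d : K) * monomial α (coeff α f) := by rw [C_mul_monomial, mul_comm]
  calc ∑ k : Fin n, X k * pderiv k f
      = ∑ k : Fin n, X k * pderiv k (∑ α ∈ f.support, monomial α (coeff α f)) := by
        rw [support_sum_monomial_coeff]
    _ = ∑ k : Fin n, ∑ α ∈ f.support, X k * pderiv k (monomial α (coeff α f)) := by
        refine Finset.sum_congr rfl fun k _ => ?_
        rw [map_sum, Finset.mul_sum]
    _ = ∑ α ∈ f.support, ∑ k : Fin n, X k * pderiv k (monomial α (coeff α f)) :=
        Finset.sum_comm
    _ = ∑ α ∈ f.support, C (d : K) * monomial α (coeff α f) := Finset.sum_congr rfl inner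
    _ = C (d : K) * f := by rw [← Finset.mul_sum, support_sum_monomial_coeff]

private lemma eq_C_of_pderiv_eq_zero' {K : Type*} [Field K] {n d : ℕ}
    (hchar : ringChar K = 0 ∨ d < ringChar K) {p : MvPolynomial (Fin n) K}
    (hp : p ≠ 0) (hdeg : p.totalDegree ≤ d) (hpd : ∀ k, pderiv k p = 0) :
    ∃ a : K, a ≠ 0 ∧ p = C a := by
  have hsupp : ∀ α ∈ p.support, α = (0 : Fin n →₀ ℕ) := by
    intro α hα
    by_contra hα0
    obtain ⟨k, hk⟩ : ∃ k, α k ≠ 0 := by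
      by_contra hcon; push_neg at hcon
      exact hα0 (Finsupp.ext hcon)
    have h1 : Finsupp.single k 1 ≤ α := Finsupp.single_le_iff.mpr (by omega)
    have h2 := coeff_pderiv' k p (α - Finsupp.single k 1)
    rw [hpd k, coeff_zero, tsub_add_cancel_of_le h1] at h2
    have h3 : ((α - Finsupp.single k 1 : Fin n →₀ ℕ)) k + 1 = α k := by
      rw [Finsupp.tsub_apply, Finsupp.single_eq_same]; omega
    rw [h3] at h2
    have h4 : α k ≤ p.totalDegree := by
      have h5 := le_totalDegree hα
      have h6 : α k ≤ α.sum fun _ e => e := by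
        have : α k ≤ ∑ i ∈ α.support, α i :=
          Finset.single_le_sum (fun _ _ => Nat.zero_le _) (Finsupp.mem_support_iff.mpr hk)
        exact this
      omega
    have h5 : ((α k : ℕ) : K) ≠ 0 := castK_ne_zero' hchar (by omega) (by omega)
    exact mem_support_iff.mp hα (by
      have := mul_eq_zero.mp h2.symm
      tauto)
  have hmem : (0 : Fin n →₀ ℕ) ∈ p.support := by
    obtain ⟨α, hα⟩ := support_nonempty.mpr hp
    have := hsupp α hα; rwa [this] at hα
  refine ⟨coeff 0 p, mem_support_iff.mp hmem, ?_⟩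
  have : p.support = {0} := Finset.eq_singleton_iff_unique_mem.mpr ⟨hmem, hsupp⟩
  conv_lhs => rw [← support_sum_monomial_coeff p]
  rw [this, Finset.sum_singleton, monomial_zero']

private lemma totalDegree_le_mul' {K : Type*} [Field K] {n : ℕ}
    {p q : MvPolynomial (Fin n) K} (hp : p ≠ 0) (hq : q ≠ 0) :
    p.totalDegree ≤ (p * q).totalDegree := by
  classical
  set ψ : MvPolynomial (Fin n) K →+* Polynomial (MvPolynomial (Fin n) K) :=
    eval₂Hom (Polynomial.C.comp (C : K →+* _)) (fun i => Polynomial.C (X i) * Polynomial.X)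
    with hψ
  have hmon : ∀ (β : Fin n →₀ ℕ) (a : K),
      ψ (monomial β a) = Polynomial.C (monomial β a) * Polynomial.X ^ β.degree := by
    intro β a
    rw [hψ, coe_eval₂Hom, eval₂_monomial]
    have h1 : (β.prod fun i e => (Polynomial.C (X i : MvPolynomial (Fin n) K)
        * Polynomial.X) ^ e)
        = Polynomial.C (β.prod fun i e => (X i : MvPolynomial (Fin n) K) ^ e)
          * Polynomial.X ^ β.degree := by
      rw [Finsupp.prod]
      simp_rw [mul_pow, ← map_pow]
      rw [Finset.prod_mul_distrib, ← map_prod, Finset.prod_pow_eq_pow_sum]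
      rfl
    rw [h1, RingHom.comp_apply, ← mul_assoc, ← map_mul, ← monomial_eq]
  have hcoeff : ∀ (f : MvPolynomial (Fin n) K) (e : ℕ),
      (ψ f).coeff e = homogeneousComponent e f := by
    intro f
    induction f using MvPolynomial.induction_on' with
    | monomial β a =>
      intro e
      rw [hmon β a, Polynomial.coeff_C_mul, Polynomial.coeff_X_pow,
        homogeneousComponent_of_mem ((mem_homogeneousSubmodule _ _).mpr
          (isHomogeneous_monomial a rfl)),
        mul_ite, mul_one, mul_zero]
    | add f g ihf ihg =>
      intro e
      rw [map_add, Polynomial.coeff_add, map_add, ihf, ihg]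
  have hdeg : ∀ f : MvPolynomial (Fin n) K, f ≠ 0 →
      (ψ f).natDegree = f.totalDegree ∧ ψ f ≠ 0 := by
    intro f hf
    have hne : (ψ f).coeff f.totalDegree ≠ 0 := by
      rw [hcoeff]
      obtain ⟨α, hα, hmax⟩ := Finset.exists_mem_eq_sup f.support
        (support_nonempty.mpr hf) (fun s => s.sum fun _ e => e)
      intro h0
      have h1 : coeff α (homogeneousComponent f.totalDegree f) = coeff α f := by
        rw [coeff_homogeneousComponent, if_pos]
        show α.degree = f.totalDegree
        rw [MvPolynomial.totalDegree, hmax]; rfl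
      rw [h0, coeff_zero] at h1
      exact mem_support_iff.mp hα h1.symm
    have hle : (ψ f).natDegree ≤ f.totalDegree := by
      apply Polynomial.natDegree_le_iff_coeff_eq_zero.mpr
      intro N hN
      rw [hcoeff, homogeneousComponent_eq_zero N f hN]
    exact ⟨le_antisymm hle (Polynomial.le_natDegree_of_ne_zero hne),
      fun h0 => hne (by rw [h0, Polynomial.coeff_zero])⟩
  obtain ⟨hdp, hp0⟩ := hdeg p hp
  obtain ⟨hdq, hq0⟩ := hdeg q hq
  obtain ⟨hdpq, _⟩ := hdeg _ (mul_ne_zero hp hq)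
  have hmul : (ψ (p * q)).natDegree = (ψ p).natDegree + (ψ q).natDegree := by
    rw [map_mul]; exact Polynomial.natDegree_mul hp0 hq0
  omega

private lemma minors_eq' {K : Type*} [Field K] {m n : ℕ}
    (H : Fin m → MvPolynomial (Fin n) K) (hrk : jacRank H ≤ 1) (i j : Fin m) :
    ∀ k l : Fin n, pderiv k (H i) * pderiv l (H j) = pderiv l (H i) * pderiv k (H j) := by
  set F := FractionRing (MvPolynomial (Fin n) K)
  set φ := algebraMap (MvPolynomial (Fin n) K) F with hφ
  set A := (jac H).map φ with hA
  have hdep : ∃ a b : F, (a ≠ 0 ∨ b ≠ 0) ∧ ∀ k, a * A i k + b * A j k = 0 := by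
    by_contra hcon
    push_neg at hcon
    have li : LinearIndependent F ![A i, A j] := by
      rw [LinearIndependent.pair_iff]
      intro s t hst
      by_contra hne
      have hor : s ≠ 0 ∨ t ≠ 0 := by tauto
      obtain ⟨k, hk⟩ := hcon s t hor
      apply hk
      have := congrFun hst k
      simpa using this
    set S := Submodule.span F (Set.range A) with hS
    have hAiS : A i ∈ S := Submodule.subset_span ⟨i, rfl⟩
    have hAjS : A j ∈ S := Submodule.subset_span ⟨j, rfl⟩
    haveI : FiniteDimensional F S := FiniteDimensional.span_of_finite F (Set.finite_range A)
    have li2 : LinearIndependent F ![(⟨A i, hAiS⟩ : S), ⟨A j, hAjS⟩] := by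
      apply LinearIndependent.of_comp S.subtype
      convert li
      ext x : 1
      fin_cases x <;> rfl
    have h2 := li2.fintype_card_le_finrank
    rw [Fintype.card_fin] at h2
    have h3 : jacRank H = Module.finrank F S := by
      rw [jacRank, ← hφ, ← hA, Matrix.rank_eq_finrank_span_row, hS]
      rfl
    omega
  obtain ⟨a, b, hab, hk⟩ := hdep
  intro k l
  apply IsFractionRing.injective (MvPolynomial (Fin n) K) F
  rw [map_mul, map_mul]
  show A i k * A j l = A i l * A j k
  by_cases ha : a = 0
  · have hb : b ≠ 0 := by tauto
    have hz : ∀ k', A j k' = 0 := by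
      intro k'
      have := hk k'
      rw [ha, zero_mul, zero_add] at this
      exact (mul_eq_zero.mp this).resolve_left hb
    rw [hz l, hz k, mul_zero, mul_zero]
  · have e1 : ∀ k', a * A i k' = -(b * A j k') := by
      intro k'
      have h := hk k'
      rw [add_eq_zero_iff_eq_neg] at h
      exact h
    apply mul_left_cancel₀ ha
    calc a * (A i k * A j l) = (a * A i k) * A j l := by ring
      _ = -(b * A j k) * A j l := by rw [e1 k]
      _ = -(b * A j l) * A j k := by ring
      _ = (a * A i l) * A j k := by rw [e1 l]
      _ = a * (A i l * A j k) := by ring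

/-- Let `d ≥ 1` and `K` a field of characteristic `0` or `> d`. If `H ∈ K[x]^m` is
homogeneous of degree `d` with `rk JH ≤ 1`, then the components of `H` are pairwise
linearly dependent over `K`. -/
theorem rank_le_one_components_pairwise_dependent {K : Type*} [Field K]
    (d : ℕ) (hd : 1 ≤ d) (hchar : ringChar K = 0 ∨ d < ringChar K)
    {m n : ℕ} (H : Fin m → MvPolynomial (Fin n) K)
    (hhom : ∀ i, (H i).IsHomogeneous d)
    (hrk : jacRank H ≤ 1) :
    ∀ i j : Fin m, ∃ a b : K, (a ≠ 0 ∨ b ≠ 0) ∧ a • H i + b • H j = 0 := by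
  intro i j
  by_cases hg : H j = 0
  · exact ⟨0, 1, Or.inr one_ne_zero, by simp [hg]⟩
  by_cases hf : H i = 0
  · exact ⟨1, 0, Or.inl one_ne_zero, by simp [hf]⟩
  have hdK : ((d : ℕ) : K) ≠ 0 := castK_ne_zero' hchar hd le_rfl
  have minors := minors_eq' H hrk i j
  have eulf := euler' (hhom i)
  have eulg := euler' (hhom j)
  have key : ∀ k, pderiv k (H i) * H j = pderiv k (H j) * H i := by
    intro k
    have hC : (C (d : K) : MvPolynomial (Fin n) K) ≠ 0 := by
      rw [Ne, MvPolynomial.C_eq_zero]; exact hdK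
    apply mul_left_cancel₀ hC
    calc C (d : K) * (pderiv k (H i) * H j)
        = pderiv k (H i) * (C (d : K) * H j) := by ring
      _ = pderiv k (H i) * ∑ l, X l * pderiv l (H j) := by rw [eulg]
      _ = ∑ l, X l * (pderiv k (H i) * pderiv l (H j)) := by
          rw [Finset.mul_sum]; exact Finset.sum_congr rfl fun l _ => by ring
      _ = ∑ l, X l * (pderiv l (H i) * pderiv k (H j)) :=
          Finset.sum_congr rfl fun l _ => by rw [minors k l]
      _ = pderiv k (H j) * ∑ l, X l * pderiv l (H i) := by
          rw [Finset.mul_sum]; exact Finset.sum_congr rfl fun l _ => by ring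
      _ = pderiv k (H j) * (C (d : K) * H i) := by rw [eulf]
      _ = C (d : K) * (pderiv k (H j) * H i) := by ring
  obtain ⟨f₁, g₁, c, hcop, hcf, hcg⟩ :=
    UniqueFactorizationMonoid.exists_reduced_factors (H i) hf (H j)
  have hc : c ≠ 0 := fun h => hf (by rw [← hcf, h, zero_mul])
  have hf₁ : f₁ ≠ 0 := fun h => hf (by rw [← hcf, h, mul_zero])
  have hg₁ : g₁ ≠ 0 := fun h => hg (by rw [← hcg, h, mul_zero])
  have hder : ∀ k, pderiv k f₁ * g₁ = pderiv k g₁ * f₁ := by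
    intro k
    have h1 := key k
    rw [← hcf, ← hcg, pderiv_mul, pderiv_mul] at h1
    have h2 : c * c * (pderiv k f₁ * g₁) = c * c * (pderiv k g₁ * f₁) := by
      linear_combination h1
    exact mul_left_cancel₀ (mul_ne_zero hc hc) h2
  have hzero : ∀ (p q : MvPolynomial (Fin n) K), p ≠ 0 → q ≠ 0 → IsRelPrime p q →
      (∀ k, pderiv k p * q = pderiv k q * p) → ∀ k, pderiv k p = 0 := by
    intro p q hp hq hcop' hder' k
    by_contra hne
    have hdvd : p ∣ pderiv k p := by
      apply hcop'.dvd_of_dvd_mul_right (y := pderiv k p) (z := q)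
      exact Dvd.intro_left (pderiv k q) (hder' k).symm
    obtain ⟨t, ht⟩ := hdvd
    have ht0 : t ≠ 0 := by
      intro h0; rw [h0, mul_zero] at ht; exact hne ht
    have := totalDegree_le_mul' hp ht0
    rw [← ht] at this
    exact absurd (totalDegree_pderiv_lt' k hne) (by omega)
  have hdf₁ : ∀ k, pderiv k f₁ = 0 := hzero f₁ g₁ hf₁ hg₁ hcop hder
  have hdg₁ : ∀ k, pderiv k g₁ = 0 := by
    refine hzero g₁ f₁ hg₁ hf₁ hcop.symm fun k => ?_
    rw [← hder k]
  have hdegf₁ : f₁.totalDegree ≤ d := by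
    have h1 : f₁.totalDegree ≤ (c * f₁).totalDegree := by
      rw [mul_comm]; exact totalDegree_le_mul' hf₁ hc
    rw [hcf, (hhom i).totalDegree hf] at h1
    exact h1
  have hdegg₁ : g₁.totalDegree ≤ d := by
    have h1 : g₁.totalDegree ≤ (c * g₁).totalDegree := by
      rw [mul_comm]; exact totalDegree_le_mul' hg₁ hc
    rw [hcg, (hhom j).totalDegree hg] at h1
    exact h1
  obtain ⟨a, ha, hfa⟩ := eq_C_of_pderiv_eq_zero' hchar hf₁ hdegf₁ hdf₁
  obtain ⟨b, hb, hgb⟩ := eq_C_of_pderiv_eq_zero' hchar hg₁ hdegg₁ hdg₁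
  refine ⟨b, -a, Or.inl hb, ?_⟩
  rw [← hcf, ← hcg, hfa, hgb, smul_eq_C_mul, smul_eq_C_mul, map_neg]
  ring
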